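/- arXiv:2112.04826 — 2 statements merged into one kernel-verified Lean document; each statement's English description precedes it below -/
import Mathlib

section
/- Every finite-dimensional real associative division algebra is isomorphic to R, C, or H. -/
open Polynomial

section
variable {D : Type*} [DivisionRing D] [Algebra ℝ D] [FiniteDimensional ℝ D]

private lemma key_sqrt (x : D) (hx : x ∉ Set.range (algebraMap ℝ D)) :
    ∃ a t : ℝ, 0 < t ∧ (t⁻¹ • (x - algebraMap ℝ D a)) ^ 2 = -1 := by
  have hint : IsIntegral ℝ x := IsIntegral.of_finite ℝ x
  have hirr := minpoly.irreducible hint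
  have hdeg2 : (minpoly ℝ x).natDegree ≤ 2 := hirr.natDegree_le_two
  have hmonic := minpoly.monic hint
  have hpos := minpoly.natDegree_pos hint
  interval_cases hd : (minpoly ℝ x).natDegree
  · -- degree 1 : x is real, contradiction
    exfalso
    have hp := hmonic.eq_X_add_C hd
    have h1 := minpoly.aeval ℝ x
    rw [hp] at h1
    simp only [map_add, aeval_X, aeval_C] at h1
    exact hx ⟨-(minpoly ℝ x).coeff 0, by
      rw [map_neg]; exact (eq_neg_of_add_eq_zero_left h1).symm⟩
  · -- degree 2
    set b := (minpoly ℝ x).coeff 1 with hb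
    set c := (minpoly ℝ x).coeff 0 with hc
    have h0 : algebraMap ℝ D c + algebraMap ℝ D b * x + x * x = 0 := by
      have hexp := (minpoly ℝ x).as_sum_range' 3 (by omega)
      have h1 := minpoly.aeval ℝ x
      rw [hexp] at h1
      have h2 : (minpoly ℝ x).coeff 2 = 1 := by
        have := hmonic.coeff_natDegree; rwa [hd] at this
      simp only [Finset.sum_range_succ, Finset.sum_range_zero, zero_add, map_add,
        aeval_monomial, pow_zero, mul_one, pow_one, h2, map_one, one_mul, pow_two] at h1
      rw [← hb, ← hc] at h1
      exact h1
    set z : D := algebraMap ℝ D (b / 2) with hz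
    set u : D := x + z with hu
    have hxz : x * z = z * x := (Algebra.commutes (b/2) x).symm
    have husq : u ^ 2 = algebraMap ℝ D (b ^ 2 / 4 - c) := by
      have e1 : u ^ 2 = x * x + (z * x + z * x) + z * z := by
        calc u ^ 2 = (x + z) * (x + z) := by rw [hu, sq]
        _ = x * x + x * z + (z * x + z * z) := by rw [add_mul, mul_add, mul_add]
        _ = x * x + (z * x + z * x) + z * z := by rw [hxz]; abel
      have e2 : z * x + z * x = algebraMap ℝ D b * x := by
        rw [hz, ← add_mul, ← map_add]; norm_num
      have e3 : z * z = algebraMap ℝ D (b ^ 2 / 4) := by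
        rw [hz, ← map_mul]; congr 1; ring
      rw [e1, e2, e3]
      have e4 : x * x + algebraMap ℝ D b * x = - algebraMap ℝ D c := by
        have h0' : x * x + algebraMap ℝ D b * x + algebraMap ℝ D c = 0 := by
          have := h0; abel_nf at this ⊢; exact this
        exact eq_neg_of_add_eq_zero_left h0'
      rw [e4, map_sub]
      abel
    set r : ℝ := b ^ 2 / 4 - c with hr
    have hrneg : r < 0 := by
      by_contra hge
      push_neg at hge
      set s := Real.sqrt r with hs
      have hss : s * s = r := Real.mul_self_sqrt hge
      have hcu : Commute (algebraMap ℝ D s) u := Algebra.commute_algebraMap_left s u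
      have hfac : (u + algebraMap ℝ D s) * (u - algebraMap ℝ D s) = 0 := by
        rw [← hcu.symm.mul_self_sub_mul_self_eq, ← map_mul, hss, ← sq, husq, sub_self]
      rcases mul_eq_zero.mp hfac with h1 | h1
      · refine hx ⟨-s - b/2, ?_⟩
        have : u = - algebraMap ℝ D s := eq_neg_of_add_eq_zero_left h1
        rw [map_sub, map_neg, ← this, hu, hz]
        abel
      · refine hx ⟨s - b/2, ?_⟩
        have : u = algebraMap ℝ D s := sub_eq_zero.mp h1
        rw [map_sub, ← this, hu, hz]
        abel
    refine ⟨-(b/2), Real.sqrt (-r), Real.sqrt_pos.mpr (by linarith), ?_⟩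
    have hxu : x - algebraMap ℝ D (-(b/2)) = u := by
      rw [map_neg, sub_neg_eq_add, hu, hz]
    rw [hxu, _root_.smul_pow, husq, Algebra.algebraMap_eq_smul_one, smul_smul]
    have hts : Real.sqrt (-r) ^ 2 = -r := Real.sq_sqrt (by linarith)
    have hv : (Real.sqrt (-r))⁻¹ ^ 2 * r = -1 := by
      rw [inv_pow, hts]
      field_simp
      rw [div_self (by linarith : r ≠ 0)]
    rw [hv, neg_one_smul]
end

section
variable {D : Type*} [DivisionRing D] [Algebra ℝ D] [FiniteDimensional ℝ D]

private lemma span_of_commute (i : D) (hi : i * i = -1) (y : D) (hy : Commute y i) :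
    ∃ a b : ℝ, y = algebraMap ℝ D a + b • i := by
  by_cases h : y ∈ Set.range (algebraMap ℝ D)
  · obtain ⟨a, rfl⟩ := h; exact ⟨a, 0, by simp⟩
  · obtain ⟨a, t, ht, hw⟩ := key_sqrt y h
    set w : D := t⁻¹ • (y - algebraMap ℝ D a) with hwdef
    have hcw : Commute w i :=
      (hy.sub_left (Algebra.commute_algebraMap_left a i)).smul_left t⁻¹
    have hww : w * w = -1 := by rw [← sq]; exact hw
    have hfac : (w - i) * (w + i) = 0 := by
      have e : (w - i) * (w + i) = w * w + w * i - i * w - i * i := by noncomm_ring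
      rw [e, hcw.eq, hww, hi]; abel
    have hyw : y = algebraMap ℝ D a + t • w := by
      rw [hwdef, smul_smul, mul_inv_cancel₀ (ne_of_gt ht), one_smul]; abel
    rcases mul_eq_zero.mp hfac with h1 | h1
    · exact ⟨a, t, by rw [hyw, sub_eq_zero.mp h1]⟩
    · exact ⟨a, -t, by rw [hyw, eq_neg_of_add_eq_zero_left h1, smul_neg, neg_smul]⟩

private lemma conj_comm (i v : D) (hii : i * i = -1) :
    i * (v - i * v * i) = (v - i * v * i) * i := by
  have e1 : i * (v - i * v * i) = i * v - (i * i) * (v * i) := by noncomm_ring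
  have e2 : (v - i * v * i) * i = v * i - (i * v) * (i * i) := by noncomm_ring
  rw [e1, e2, hii]; noncomm_ring

private lemma conj_anti (i v : D) (hii : i * i = -1) :
    i * (v + i * v * i) = -((v + i * v * i) * i) := by
  have e1 : i * (v + i * v * i) = i * v + (i * i) * (v * i) := by noncomm_ring
  have e2 : (v + i * v * i) * i = v * i + (i * v) * (i * i) := by noncomm_ring
  rw [e1, e2, hii]; noncomm_ring

end

private theorem frobAux (D : Type*) [DivisionRing D] [Algebra ℝ D] [FiniteDimensional ℝ D] :
    Nonempty (D ≃ₐ[ℝ] ℝ) ∨ Nonempty (D ≃ₐ[ℝ] ℂ) ∨ Nonempty (D ≃ₐ[ℝ] Quaternion ℝ) := by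
  by_cases hR : ∀ y : D, y ∈ Set.range (algebraMap ℝ D)
  · left
    exact ⟨(AlgEquiv.ofBijective (Algebra.ofId ℝ D)
      ⟨(algebraMap ℝ D).injective, hR⟩).symm⟩
  push_neg at hR
  obtain ⟨x, hx⟩ := hR
  obtain ⟨a, t, ht, hi2⟩ := key_sqrt x hx
  set i : D := t⁻¹ • (x - algebraMap ℝ D a) with hidef
  have hii : i * i = -1 := by rw [← sq]; exact hi2
  have hine : i ≠ 0 := by
    intro h; rw [h, mul_zero] at hii; exact one_ne_zero (neg_eq_zero.mp hii.symm)
  clear_value i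
  by_cases hcomm : ∀ y : D, Commute y i
  · right; left
    set f := Complex.liftAux i hii with hf
    have hsurj : Function.Surjective f := by
      intro v
      obtain ⟨A, B, hv⟩ := span_of_commute i hii v (hcomm v)
      exact ⟨⟨A, B⟩, by rw [hf, Complex.liftAux_apply]; exact hv.symm⟩
    exact ⟨(AlgEquiv.ofBijective f ⟨f.toRingHom.injective, hsurj⟩).symm⟩
  push_neg at hcomm
  obtain ⟨y, hy⟩ := hcomm
  right; right
  set j₀ : D := y + i * y * i with hj0
  have hj0ne : j₀ ≠ 0 := by
    intro h
    apply hy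
    have h1 : i * y * i = -y := eq_neg_of_add_eq_zero_right h
    have h3 : i * y * (i * i) = (-y) * i := by rw [← mul_assoc, h1]
    rw [hii, mul_neg_one, neg_mul] at h3
    exact (neg_injective h3).symm
  have hanti : i * j₀ = -(j₀ * i) := conj_anti i y hii
  clear_value j₀
  have hanti' : j₀ * i = -(i * j₀) := (neg_eq_iff_eq_neg.mpr hanti).symm
  have hsq_comm : Commute (j₀ * j₀) i := by
    show j₀ * j₀ * i = i * (j₀ * j₀)
    calc j₀ * j₀ * i = j₀ * (j₀ * i) := by rw [mul_assoc]
      _ = j₀ * (-(i * j₀)) := by rw [hanti']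
      _ = (-(j₀ * i)) * j₀ := by noncomm_ring
      _ = (i * j₀) * j₀ := by rw [← hanti]
      _ = i * (j₀ * j₀) := by rw [mul_assoc]
  obtain ⟨A, B, hAB⟩ := span_of_commute i hii (j₀ * j₀) hsq_comm
  have hij0ne : i * j₀ ≠ 0 := mul_ne_zero hine hj0ne
  have hBzero : B = 0 := by
    have hcj : j₀ * (j₀ * j₀) = (j₀ * j₀) * j₀ := by rw [mul_assoc]
    rw [hAB] at hcj
    have hcA : j₀ * algebraMap ℝ D A = algebraMap ℝ D A * j₀ := (Algebra.commutes A j₀).symm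
    rw [mul_add, add_mul, mul_smul_comm, smul_mul_assoc, hcA] at hcj
    have h2 := add_left_cancel hcj
    rw [hanti', smul_neg] at h2
    have h3 : (2 * B) • (i * j₀) = 0 := by
      rw [two_mul, add_smul]
      nth_rewrite 2 [← h2]
      exact add_neg_cancel _
    rcases smul_eq_zero.mp h3 with h4 | h4
    · linarith
    · exact absurd h4 hij0ne
  rw [hBzero, zero_smul, add_zero] at hAB
  have hAneg : A < 0 := by
    by_contra hge
    push_neg at hge
    set s := Real.sqrt A with hs
    have hss : s * s = A := Real.mul_self_sqrt hge
    have hfac : (j₀ + algebraMap ℝ D s) * (j₀ - algebraMap ℝ D s) = 0 := by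
      rw [← (Algebra.commute_algebraMap_right s j₀).mul_self_sub_mul_self_eq,
        hAB, ← map_mul, hss, sub_self]
    have hj0c : ∀ r : ℝ, j₀ = algebraMap ℝ D r → False := by
      intro r hr
      have hcomm' : i * j₀ = j₀ * i := by
        rw [hr]; exact (Algebra.commutes r i).symm
      rw [hcomm'] at hanti
      have h5 : ((2 : ℝ)) • (j₀ * i) = 0 := by
        rw [two_smul, ← sub_neg_eq_add, ← hanti]; abel
      rcases smul_eq_zero.mp h5 with h6 | h6
      · norm_num at h6
      · exact hj0ne (by rcases mul_eq_zero.mp h6 with h7 | h7; · exact h7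
                        · exact absurd h7 hine)
    rcases mul_eq_zero.mp hfac with h1 | h1
    · exact hj0c (-s) (by rw [map_neg]; exact eq_neg_of_add_eq_zero_left h1)
    · exact hj0c s (sub_eq_zero.mp h1)
  -- normalize j
  set t' : ℝ := Real.sqrt (-A) with ht'def
  have ht'pos : 0 < t' := Real.sqrt_pos.mpr (by linarith)
  set j : D := t'⁻¹ • j₀ with hjdef
  have hjj : j * j = -1 := by
    rw [hjdef, smul_mul_smul_comm, hAB, Algebra.algebraMap_eq_smul_one, smul_smul]
    have htt : t' * t' = -A := Real.mul_self_sqrt (by linarith)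
    have : t'⁻¹ * t'⁻¹ * A = -1 := by
      have h9 : t' ≠ 0 := ne_of_gt ht'pos
      field_simp
      nlinarith [htt]
    rw [this, neg_one_smul]
  have hjanti : i * j = -(j * i) := by
    rw [hjdef, mul_smul_comm, smul_mul_assoc, hanti, smul_neg]
  have hjanti' : j * i = -(i * j) := (neg_eq_iff_eq_neg.mpr hjanti).symm
  clear_value j
  have hjne : j ≠ 0 := by
    intro h
    rw [h, mul_zero] at hjj
    exact one_ne_zero (neg_eq_zero.mp hjj.symm)
  -- quaternion basis
  let Q : QuaternionAlgebra.Basis D (-1 : ℝ) (0 : ℝ) (-1 : ℝ) :=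
    { i := i, j := j, k := i * j,
      i_mul_i := by rw [hii, neg_smul, one_smul, zero_smul, add_zero]
      j_mul_j := by rw [hjj, neg_smul, one_smul]
      i_mul_j := rfl
      j_mul_i := by rw [hjanti', zero_smul, zero_sub] }
  let f : Quaternion ℝ →ₐ[ℝ] D := Q.liftHom
  have hinj : Function.Injective f := f.toRingHom.injective
  have hf : ∀ q : Quaternion ℝ,
      f q = algebraMap ℝ D q.re + q.imI • i + q.imJ • j + q.imK • (i * j) := fun _ => rfl
  have hfi : f ⟨0, 1, 0, 0⟩ = i := by refine (hf _).trans ?_; simp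
  have hfj : f ⟨0, 0, 1, 0⟩ = j := by refine (hf _).trans ?_; simp
  have hiR : i ∈ f.range := ⟨⟨0, 1, 0, 0⟩, hfi⟩
  have hjR : j ∈ f.range := ⟨⟨0, 0, 1, 0⟩, hfj⟩
  have hsurj : Function.Surjective f := by
    intro v
    set p : D := (2 : ℝ)⁻¹ • (v - i * v * i) with hp
    set m : D := (2 : ℝ)⁻¹ • (v + i * v * i) with hm
    have hvpm : v = p + m := by
      rw [hp, hm, ← smul_add]
      have e : (v - i * v * i) + (v + i * v * i) = (2 : ℝ) • v := by
        rw [two_smul]; abel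
      rw [e, smul_smul]
      norm_num
    have hpc : Commute p i := by
      show p * i = i * p
      rw [hp, smul_mul_assoc, mul_smul_comm, conj_comm i v hii]
    have hmc : i * m = -(m * i) := by
      rw [hm, mul_smul_comm, smul_mul_assoc, conj_anti i v hii, smul_neg]
    clear_value p m
    set c : D := (-j) * m with hc
    have hjcm : j * c = m := by
      rw [hc]
      calc j * (-j * m) = -((j * j) * m) := by noncomm_ring
        _ = m := by rw [hjj]; noncomm_ring
    have hcc : Commute c i := by
      show c * i = i * c
      rw [hc]
      calc (-j * m) * i = -(j * (m * i)) := by noncomm_ring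
        _ = -(j * (-(i * m))) := by rw [← neg_eq_iff_eq_neg.mpr hmc]
        _ = (j * i) * m := by noncomm_ring
        _ = (-(i * j)) * m := by rw [hjanti']
        _ = -(i * (j * m)) := by noncomm_ring
        _ = i * (-j * m) := by noncomm_ring
    obtain ⟨Ap, Bp, hps⟩ := span_of_commute i hii p hpc
    obtain ⟨Ac, Bc, hcs⟩ := span_of_commute i hii c hcc
    have hpR : p ∈ f.range := by
      rw [hps]
      exact add_mem (f.range.algebraMap_mem Ap) (f.range.smul_mem hiR Bp)
    have hcR : c ∈ f.range := by
      rw [hcs]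
      exact add_mem (f.range.algebraMap_mem Ac) (f.range.smul_mem hiR Bc)
    have hmR : m ∈ f.range := by
      rw [← hjcm]; exact mul_mem hjR hcR
    have : v ∈ f.range := by rw [hvpm]; exact add_mem hpR hmR
    exact this
  exact ⟨(AlgEquiv.ofBijective f ⟨hinj, hsurj⟩).symm⟩

/-- Frobenius: every finite-dimensional real associative division algebra is
isomorphic, as an ℝ-algebra, to ℝ, ℂ, or the quaternions ℍ. -/
theorem stmt_7 (D : Type*) [Ring D] [Algebra ℝ D] [FiniteDimensional ℝ D] [Nontrivial D]
    (hdiv : ∀ x : D, x ≠ 0 → IsUnit x) :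
    Nonempty (D ≃ₐ[ℝ] ℝ) ∨ Nonempty (D ≃ₐ[ℝ] ℂ) ∨ Nonempty (D ≃ₐ[ℝ] Quaternion ℝ) := by
  letI : DivisionRing D :=
    DivisionRing.ofIsUnitOrEqZero fun a => or_iff_not_imp_right.mpr (hdiv a)
  exact frobAux D
end

section
/- For a compact group G acting on a finite-dimensional complex inner product space V by a unitary representation, and a G-equivariant operator-valued spectral measure F (i.e., F(gA) = θ(g)F(A)θ(g)⁻¹ for all g ∈ G and Borel sets A) with trace measure μ(A) = tr F(A): the measure μ is G-invariant (μ(gA) = μ(A)), F is absolutely continuous with respect to μ, and the Radon–Nikodym density f(k) = dF/dμ takes values in the convex compact set of Hermitian nonnegative-definite operators on V with unit trace and satisfies f(gk) = θ(g)f(k)θ(g)⁻¹ for μ-almost all k. -/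
open MeasureTheory

section Aux

variable {V : Type*} [NormedAddCommGroup V] [InnerProductSpace ℂ V]

lemma aux_trace_eq_sum_inner [FiniteDimensional ℂ V]
    (e : OrthonormalBasis (Fin (Module.finrank ℂ V)) ℂ V) (T : V →ₗ[ℂ] V) :
    LinearMap.trace ℂ V T = ∑ i, (inner ℂ (e i) (T (e i)) : ℂ) := by
  rw [LinearMap.trace_eq_matrix_trace ℂ e.toBasis, Matrix.trace]
  refine Finset.sum_congr rfl fun i _ => ?_
  simp [Matrix.diag_apply, LinearMap.toMatrix_apply, OrthonormalBasis.coe_toBasis_repr_apply,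
    OrthonormalBasis.repr_apply_apply, OrthonormalBasis.coe_toBasis]

lemma aux_key (T : V →L[ℂ] V)
    (hH : ∀ u v : V, (inner ℂ u (T v) : ℂ) = starRingEnd ℂ (inner ℂ v (T u)))
    (hP : ∀ v : V, 0 ≤ (inner ℂ v (T v) : ℂ).re) (a b : V) :
    0 ≤ (inner ℂ a (T a) : ℂ).re + (inner ℂ b (T b) : ℂ).re + 2 * (inner ℂ a (T b) : ℂ).re := by
  have h := hP (a + b)
  have hab : T (a + b) = T a + T b := map_add T a b
  rw [hab, inner_add_left, inner_add_right, inner_add_right] at h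
  have hba : (inner ℂ b (T a) : ℂ).re = (inner ℂ a (T b) : ℂ).re := by
    rw [hH b a]; exact Complex.conj_re _
  simp only [Complex.add_re] at h
  linarith

lemma aux_entry_zero (T : V →L[ℂ] V)
    (hH : ∀ u v : V, (inner ℂ u (T v) : ℂ) = starRingEnd ℂ (inner ℂ v (T u)))
    (hP : ∀ v : V, 0 ≤ (inner ℂ v (T v) : ℂ).re) (u v : V)
    (hu : (inner ℂ u (T u) : ℂ).re = 0) (hv : (inner ℂ v (T v) : ℂ).re = 0) :
    (inner ℂ u (T v) : ℂ) = 0 := by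
  have hvv : ∀ c : ℂ, ‖c‖ = 1 → (inner ℂ (c • v) (T (c • v)) : ℂ).re = 0 := by
    intro c hc
    rw [_root_.map_smul T, inner_smul_left, inner_smul_right, ← mul_assoc]
    have : (starRingEnd ℂ c) * c = 1 := by
      rw [mul_comm, Complex.mul_conj]
      norm_cast
      rw [← Complex.sq_norm, hc, one_pow]
    rw [this, one_mul, hv]
  have huv : ∀ c : ℂ, ‖c‖ = 1 → 0 ≤ (c * (inner ℂ u (T v) : ℂ)).re := by
    intro c hc
    have h1 := aux_key T hH hP u (c • v)
    have h2 := aux_key T hH hP u (-(c • v))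
    rw [hvv c hc] at h1
    have h2' : (inner ℂ (-(c • v)) (T (-(c • v))) : ℂ).re = 0 := by
      rw [map_neg, inner_neg_neg]; exact hvv c hc
    rw [h2'] at h2
    rw [map_neg, inner_neg_right] at h2
    rw [_root_.map_smul T, inner_smul_right] at h1
    have h2'' : (-(c * (inner ℂ u (T v) : ℂ))).re = -((c * (inner ℂ u (T v) : ℂ)).re) := by
      simp
    rw [_root_.map_smul T, inner_smul_right] at h2
    rw [h2''] at h2
    linarith
  have hre := huv 1 (by simp)
  have hre' := huv (-1) (by simp)
  have him := huv Complex.I (by simp)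
  have him' := huv (-Complex.I) (by simp)
  simp only [one_mul, neg_mul, Complex.neg_re] at hre hre'
  have hI : (Complex.I * (inner ℂ u (T v) : ℂ)).re = -((inner ℂ u (T v) : ℂ).im) := by
    simp [Complex.mul_re]
  simp only [neg_mul, Complex.neg_re, hI] at him him'
  apply Complex.ext <;> simp <;> linarith

lemma aux_psd_zero [FiniteDimensional ℂ V] (T : V →L[ℂ] V)
    (hH : ∀ u v : V, (inner ℂ u (T v) : ℂ) = starRingEnd ℂ (inner ℂ v (T u)))
    (hP : ∀ v : V, 0 ≤ (inner ℂ v (T v) : ℂ).re)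
    (hdiag : ∀ i, (inner ℂ (stdOrthonormalBasis ℂ V i) (T (stdOrthonormalBasis ℂ V i)) : ℂ).re = 0) :
    T = 0 := by
  set e := stdOrthonormalBasis ℂ V
  have hzero : ∀ j, T (e j) = 0 := by
    intro j
    have h : ∀ i, (inner ℂ (e i) (T (e j)) : ℂ) = 0 := fun i =>
      aux_entry_zero T hH hP _ _ (hdiag i) (hdiag j)
    have hrep : e.repr (T (e j)) = 0 := by
      ext i
      simpa [OrthonormalBasis.repr_apply_apply] using h i
    exact e.repr.map_eq_zero_iff.mp hrep
  have hlin : (T : V →ₗ[ℂ] V) = 0 := e.toBasis.ext fun j => by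
    simp [OrthonormalBasis.coe_toBasis, hzero j]
  ext v
  exact LinearMap.congr_fun hlin v

end Aux

/-- Finite-dimensional Radon–Nikodym theorem for vector measures. -/
lemma aux_exists_density {α : Type*} [MeasurableSpace α] {W : Type*} [NormedAddCommGroup W]
    [NormedSpace ℝ W] [FiniteDimensional ℝ W]
    (F : VectorMeasure α W) (μ : Measure α) [IsFiniteMeasure μ]
    (hac : ∀ A : Set α, MeasurableSet A → μ A = 0 → F A = 0) :
    ∃ f : α → W, Integrable f μ ∧ ∀ A : Set α, MeasurableSet A → F A = ∫ x in A, f x ∂μ := by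
  classical
  set b : Module.Basis (Fin (Module.finrank ℝ W)) ℝ W := Module.finBasis ℝ W with hb
  have hcont : ∀ i, Continuous (b.coord i) := fun i =>
    (b.coord i).continuous_of_finiteDimensional
  set s : Fin (Module.finrank ℝ W) → SignedMeasure α := fun i =>
    F.mapRange (b.coord i).toAddMonoidHom (hcont i) with hsdef
  have hsA : ∀ i (A : Set α), s i A = b.coord i (F A) := fun i A => rfl
  have hs : ∀ i, μ.withDensityᵥ ((s i).rnDeriv μ) = s i := by
    intro i
    refine SignedMeasure.withDensityᵥ_rnDeriv_eq _ _ ?_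
    refine VectorMeasure.AbsolutelyContinuous.mk fun A hA h0 => ?_
    rw [Measure.toENNRealVectorMeasure_apply_measurable hA] at h0
    rw [hsA, hac A hA h0]
    simp
  refine ⟨fun x => ∑ i, (s i).rnDeriv μ x • b i, ?_, ?_⟩
  · exact integrable_finset_sum _ fun i _ =>
      ((s i).integrable_rnDeriv μ).smul_const _
  · intro A hA
    rw [integral_finset_sum _ (fun i _ =>
      (((s i).integrable_rnDeriv μ).smul_const _).integrableOn)]
    have hterm : ∀ i, ∫ x in A, (s i).rnDeriv μ x • b i ∂μ = s i A • b i := by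
      intro i
      rw [integral_smul_const]
      congr 1
      rw [← withDensityᵥ_apply ((s i).integrable_rnDeriv μ) hA, hs i]
    simp_rw [hterm, hsA, Module.Basis.coord_apply]
    exact (b.sum_repr (F A)).symm

/-- for a `G`-equivariant operator-valued spectral measure `F`
(`F(gA) = θ(g) F(A) θ(g)⁻¹`) on ℝᵈ with trace measure `μ(A) = tr F(A)`: `μ` is
`G`-invariant, `F ≪ μ`, and the Radon–Nikodym density `f = dF/dμ` takes values in the
convex compact set of Hermitian nonnegative-definite operators with unit trace and is
`G`-equivariant `μ`-a.e. -/
theorem stmt_17 {d : ℕ} {V : Type*} [NormedAddCommGroup V] [InnerProductSpace ℂ V]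
    [FiniteDimensional ℂ V] {G : Type*} [Group G]
    (ρ : G →* (EuclideanSpace ℝ (Fin d) ≃ₗᵢ[ℝ] EuclideanSpace ℝ (Fin d)))
    (θ : G →* (V ≃ₗᵢ[ℂ] V))
    (F : VectorMeasure (EuclideanSpace ℝ (Fin d)) (V →L[ℂ] V))
    (μ : Measure (EuclideanSpace ℝ (Fin d))) [IsFiniteMeasure μ]
    (hherm : ∀ A : Set (EuclideanSpace ℝ (Fin d)), MeasurableSet A → ∀ u v : V,
      (inner ℂ u ((F A) v) : ℂ) = starRingEnd ℂ (inner ℂ v ((F A) u)))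
    (hpos : ∀ A : Set (EuclideanSpace ℝ (Fin d)), MeasurableSet A → ∀ v : V,
      0 ≤ (inner ℂ v ((F A) v) : ℂ).re)
    (hμ : ∀ A : Set (EuclideanSpace ℝ (Fin d)), MeasurableSet A →
      μ A = ENNReal.ofReal ((LinearMap.trace ℂ V (F A).toLinearMap).re))
    (hequiv : ∀ (g : G) (A : Set (EuclideanSpace ℝ (Fin d))), MeasurableSet A →
      ∀ v : V, (F ((ρ g) '' A)) v = θ g ((F A) (θ g⁻¹ v))) :
    (∀ (g : G) (A : Set (EuclideanSpace ℝ (Fin d))), MeasurableSet A →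
      μ ((ρ g) '' A) = μ A) ∧
    (∀ A : Set (EuclideanSpace ℝ (Fin d)), MeasurableSet A → μ A = 0 → F A = 0) ∧
    (∃ f : EuclideanSpace ℝ (Fin d) → (V →L[ℂ] V),
      (∀ A : Set (EuclideanSpace ℝ (Fin d)), MeasurableSet A →
        F A = ∫ k in A, f k ∂μ) ∧
      (∀ᵐ k ∂μ, (∀ u v : V, (inner ℂ u ((f k) v) : ℂ) = starRingEnd ℂ (inner ℂ v ((f k) u))) ∧
        (∀ v : V, 0 ≤ (inner ℂ v ((f k) v) : ℂ).re) ∧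
        LinearMap.trace ℂ V (f k).toLinearMap = 1) ∧
      (∀ g : G, ∀ᵐ k ∂μ, ∀ v : V, (f (ρ g k)) v = θ g ((f k) (θ g⁻¹ v)))) := by
  classical
  have hρcomp : ∀ (g : G) (x : EuclideanSpace ℝ (Fin d)), ρ g⁻¹ (ρ g x) = x := by
    intro g x
    rw [show ρ g⁻¹ (ρ g x) = (ρ g⁻¹ * ρ g) x from rfl, ← map_mul, inv_mul_cancel, map_one]
    rfl
  have hθcomp : ∀ (g : G) (v : V), θ g (θ g⁻¹ v) = v := by
    intro g v
    rw [show θ g (θ g⁻¹ v) = (θ g * θ g⁻¹) v from rfl, ← map_mul, mul_inv_cancel, map_one]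
    rfl
  have hθcomp' : ∀ (g : G) (v : V), θ g⁻¹ (θ g v) = v := by
    intro g v
    rw [show θ g⁻¹ (θ g v) = (θ g⁻¹ * θ g) v from rfl, ← map_mul, inv_mul_cancel, map_one]
    rfl
  have hpre : ∀ (g : G) (A : Set (EuclideanSpace ℝ (Fin d))), (ρ g) ⁻¹' A = (ρ g⁻¹) '' A := by
    intro g A
    ext x
    constructor
    · intro hx
      exact ⟨ρ g x, hx, hρcomp g x⟩
    · rintro ⟨y, hy, rfl⟩
      have : ρ g (ρ g⁻¹ y) = y := by
        have := hρcomp g⁻¹ y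
        rwa [inv_inv] at this
      simpa [this] using hy
  have himg : ∀ (g : G) (A : Set (EuclideanSpace ℝ (Fin d))), MeasurableSet A →
      MeasurableSet ((ρ g) '' A) := by
    intro g A hA
    have h : (ρ g) '' A = (ρ g⁻¹) ⁻¹' A := by rw [hpre g⁻¹ A, inv_inv]
    rw [h]
    exact (ρ g⁻¹).continuous.measurable hA
  -- conjugation operator
  let Lg : G → (V →L[ℂ] V) := fun g => (θ g).toLinearIsometry.toContinuousLinearMap
  have hLg : ∀ g v, Lg g v = θ g v := fun _ _ => rfl
  let Φ : G → ((V →L[ℂ] V) →ₗ[ℂ] (V →L[ℂ] V)) := fun g =>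
    { toFun := fun T => (Lg g).comp (T.comp (Lg g⁻¹)),
      map_add' := fun T S => by ext v; simp,
      map_smul' := fun c T => by ext v; simp }
  have hΦ : ∀ g T v, Φ g T v = θ g (T (θ g⁻¹ v)) := fun _ _ _ => rfl
  have hop : ∀ (g : G) (A : Set (EuclideanSpace ℝ (Fin d))), MeasurableSet A →
      F ((ρ g) '' A) = Φ g (F A) := by
    intro g A hA
    ext v
    rw [hequiv g A hA v]
    rfl
  have htrconj : ∀ (g : G) (T : V →L[ℂ] V),
      LinearMap.trace ℂ V (Φ g T).toLinearMap = LinearMap.trace ℂ V T.toLinearMap := by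
    intro g T
    have h1 : (Φ g T).toLinearMap =
        (Lg g).toLinearMap ∘ₗ (T.toLinearMap ∘ₗ (Lg g⁻¹).toLinearMap) := rfl
    have h2 : (T.toLinearMap ∘ₗ (Lg g⁻¹).toLinearMap) ∘ₗ (Lg g).toLinearMap = T.toLinearMap := by
      apply LinearMap.ext
      intro v
      simp [hLg, hθcomp']
    rw [h1, LinearMap.trace_comp_comm', h2]
  set e := stdOrthonormalBasis ℂ V with he
  have htr : ∀ (T : V →L[ℂ] V),
      LinearMap.trace ℂ V T.toLinearMap = ∑ i, (inner ℂ (e i) (T (e i)) : ℂ) := fun T =>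
    aux_trace_eq_sum_inner e T.toLinearMap
  -- Part 1
  have part1 : ∀ (g : G) (A : Set (EuclideanSpace ℝ (Fin d))), MeasurableSet A →
      μ ((ρ g) '' A) = μ A := by
    intro g A hA
    rw [hμ _ (himg g A hA), hμ A hA, hop g A hA, htrconj g (F A)]
  -- Part 2
  have part2 : ∀ A : Set (EuclideanSpace ℝ (Fin d)), MeasurableSet A → μ A = 0 → F A = 0 := by
    intro A hA h0
    rw [hμ A hA, ENNReal.ofReal_eq_zero] at h0
    have hsum : ∑ i, (inner ℂ (e i) ((F A) (e i)) : ℂ).re ≤ 0 := by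
      have := htr (F A)
      calc ∑ i, (inner ℂ (e i) ((F A) (e i)) : ℂ).re
          = (∑ i, (inner ℂ (e i) ((F A) (e i)) : ℂ)).re := by rw [Complex.re_sum]
        _ = (LinearMap.trace ℂ V (F A).toLinearMap).re := by rw [this]
        _ ≤ 0 := h0
    have hz : ∑ i, (inner ℂ (e i) ((F A) (e i)) : ℂ).re = 0 :=
      le_antisymm hsum (Finset.sum_nonneg fun i _ => hpos A hA (e i))
    have hdiag : ∀ i, (inner ℂ (e i) ((F A) (e i)) : ℂ).re = 0 := by
      intro i
      have := (Finset.sum_eq_zero_iff_of_nonneg (fun i _ => hpos A hA (e i))).mp hz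
      exact this i (Finset.mem_univ i)
    exact aux_psd_zero (F A) (hherm A hA) (hpos A hA) hdiag
  refine ⟨part1, part2, ?_⟩
  -- Part 3
  haveI : FiniteDimensional ℂ (V →L[ℂ] V) :=
    (LinearMap.toContinuousLinearMap :
      (V →ₗ[ℂ] V) ≃ₗ[ℂ] (V →L[ℂ] V)).finiteDimensional
  obtain ⟨f, hfint, hfeq⟩ := aux_exists_density F μ part2
  -- evaluation continuous linear functionals
  let ev : V → V → ((V →L[ℂ] V) →L[ℂ] ℂ) := fun u v => LinearMap.toContinuousLinearMap
    { toFun := fun T => (inner ℂ u (T v) : ℂ),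
      map_add' := fun T S => by simp [inner_add_right],
      map_smul' := fun c T => by simp [inner_smul_right] }
  have hev : ∀ u v T, ev u v T = (inner ℂ u (T v) : ℂ) := fun _ _ _ => rfl
  have hev_int : ∀ u v, Integrable (fun k => ev u v (f k)) μ := fun u v =>
    (ev u v).integrable_comp hfint
  have hev_eval : ∀ (u v : V) (A : Set (EuclideanSpace ℝ (Fin d))), MeasurableSet A →
      ∫ k in A, ev u v (f k) ∂μ = (inner ℂ u ((F A) v) : ℂ) := by
    intro u v A hA
    rw [ContinuousLinearMap.integral_comp_comm _ hfint.integrableOn, ← hfeq A hA, hev]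
  -- trace functional
  let ℓtr : (V →L[ℂ] V) →L[ℂ] ℂ := LinearMap.toContinuousLinearMap
    { toFun := fun T => LinearMap.trace ℂ V T.toLinearMap,
      map_add' := fun T S => by simp [ContinuousLinearMap.coe_add],
      map_smul' := fun c T => by simp [ContinuousLinearMap.coe_smul] }
  have hℓtr : ∀ T, ℓtr T = LinearMap.trace ℂ V T.toLinearMap := fun _ => rfl
  -- countable dense set of V
  haveI : SecondCountableTopology V := e.repr.toHomeomorph.secondCountableTopology
  obtain ⟨D, hDc, hDd⟩ := TopologicalSpace.exists_countable_dense V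
  -- a.e. Hermitian
  have hbpair : ∀ u v : V, ∀ᵐ k ∂μ,
      (inner ℂ u ((f k) v) : ℂ) = starRingEnd ℂ (inner ℂ v ((f k) u)) := by
    intro u v
    have h2 : Integrable (fun k => starRingEnd ℂ (ev v u (f k))) μ :=
      (Complex.conjCLE : ℂ →L[ℝ] ℂ).integrable_comp (hev_int v u)
    have := Integrable.ae_eq_of_forall_setIntegral_eq _ _ (hev_int u v) h2 ?_
    · exact this.mono fun k hk => by simpa [hev] using hk
    intro s hs _
    rw [hev_eval u v s hs, integral_conj, hev_eval v u s hs]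
    exact hherm s hs u v
  have hbD : ∀ᵐ k ∂μ, ∀ u ∈ D, ∀ v ∈ D,
      (inner ℂ u ((f k) v) : ℂ) = starRingEnd ℂ (inner ℂ v ((f k) u)) :=
    (ae_ball_iff hDc).2 fun u _ => (ae_ball_iff hDc).2 fun v _ => hbpair u v
  have hb : ∀ᵐ k ∂μ, ∀ u v : V,
      (inner ℂ u ((f k) v) : ℂ) = starRingEnd ℂ (inner ℂ v ((f k) u)) := by
    refine hbD.mono fun k hk => ?_
    have hfun : (fun p : V × V => (inner ℂ p.1 ((f k) p.2) : ℂ)) =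
        fun p : V × V => starRingEnd ℂ (inner ℂ p.2 ((f k) p.1)) := by
      refine Continuous.ext_on (hDd.prod hDd) ?_ ?_ ?_
      · exact continuous_fst.inner ((f k).continuous.comp continuous_snd)
      · exact Complex.continuous_conj.comp
          (continuous_snd.inner ((f k).continuous.comp continuous_fst))
      · rintro ⟨u, v⟩ ⟨hu, hv⟩
        exact hk u hu v hv
    intro u v
    exact congrFun hfun (u, v)
  -- a.e. positive
  have hcpair : ∀ v : V, ∀ᵐ k ∂μ, 0 ≤ (inner ℂ v ((f k) v) : ℂ).re := by
    intro v
    have h1 : Integrable (fun k => (ev v v (f k)).re) μ := (hev_int v v).re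
    have := ae_nonneg_of_forall_setIntegral_nonneg h1 ?_
    · exact this.mono fun k hk => by simpa [hev] using hk
    intro s hs _
    have h2 := integral_re (μ := μ.restrict s) (hev_int v v).integrableOn
    simp only [RCLike.re_to_complex] at h2
    rw [h2, hev_eval v v s hs]
    exact hpos s hs v
  have hcD : ∀ᵐ k ∂μ, ∀ v ∈ D, 0 ≤ (inner ℂ v ((f k) v) : ℂ).re :=
    (ae_ball_iff hDc).2 fun v _ => hcpair v
  have hc : ∀ᵐ k ∂μ, ∀ v : V, 0 ≤ (inner ℂ v ((f k) v) : ℂ).re := by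
    refine hcD.mono fun k hk v => ?_
    have hclosed : IsClosed {v : V | 0 ≤ (inner ℂ v ((f k) v) : ℂ).re} :=
      isClosed_le continuous_const
        (Complex.continuous_re.comp (continuous_id.inner (f k).continuous))
    have hsub : closure D ⊆ {v : V | 0 ≤ (inner ℂ v ((f k) v) : ℂ).re} :=
      hclosed.closure_subset_iff.mpr fun x hx => hk x hx
    rw [hDd.closure_eq] at hsub
    exact hsub (Set.mem_univ v)
  -- a.e. trace one
  have hd : ∀ᵐ k ∂μ, LinearMap.trace ℂ V (f k).toLinearMap = 1 := by
    have h1 : Integrable (fun k => ℓtr (f k)) μ := ℓtr.integrable_comp hfint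
    have := Integrable.ae_eq_of_forall_setIntegral_eq _ _ h1 (integrable_const (1 : ℂ)) ?_
    · exact this.mono fun k hk => by simpa [hℓtr] using hk
    intro s hs _
    rw [ContinuousLinearMap.integral_comp_comm _ hfint.integrableOn, ← hfeq s hs, hℓtr,
      setIntegral_const, Complex.real_smul, mul_one]
    -- trace (F s) = (μ s).toReal
    have him : ∀ i, (inner ℂ (e i) ((F s) (e i)) : ℂ).im = 0 := by
      intro i
      have h := hherm s hs (e i) (e i)
      have := congrArg Complex.im h
      rw [Complex.conj_im] at this
      linarith
    have hre0 : 0 ≤ (LinearMap.trace ℂ V (F s).toLinearMap).re := by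
      rw [htr (F s), Complex.re_sum]
      exact Finset.sum_nonneg fun i _ => hpos s hs (e i)
    have hμs : (μ s).toReal = (LinearMap.trace ℂ V (F s).toLinearMap).re := by
      rw [hμ s hs, ENNReal.toReal_ofReal hre0]
    apply Complex.ext
    · simp [hμs, measureReal_def]
    · rw [htr (F s), Complex.im_sum]
      simp [him]
  -- a.e. equivariance
  have hequiv_ae : ∀ g : G, ∀ᵐ k ∂μ, ∀ v : V, (f (ρ g k)) v = θ g ((f k) (θ g⁻¹ v)) := by
    intro g
    have hemb : MeasurableEmbedding (ρ g) := (ρ g).toHomeomorph.measurableEmbedding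
    have hmp : MeasurePreserving (ρ g) μ μ := by
      refine ⟨(ρ g).continuous.measurable, ?_⟩
      ext A hA
      rw [Measure.map_apply (ρ g).continuous.measurable hA, hpre g A, part1 g⁻¹ A hA]
    let ΦL : (V →L[ℂ] V) →L[ℂ] (V →L[ℂ] V) := LinearMap.toContinuousLinearMap (Φ g)
    have h1 : Integrable (fun k => f (ρ g k)) μ := (hmp.integrable_comp_emb hemb).2 hfint
    have h2 : Integrable (fun k => ΦL (f k)) μ := ΦL.integrable_comp hfint
    have := Integrable.ae_eq_of_forall_setIntegral_eq _ _ h1 h2 ?_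
    · refine this.mono fun k hk v => ?_
      exact congrArg (fun T : V →L[ℂ] V => T v) hk
    intro s hs _
    rw [← hmp.setIntegral_image_emb hemb f s,
      ContinuousLinearMap.integral_comp_comm _ hfint.integrableOn, ← hfeq s hs,
      ← hfeq _ (himg g s hs), hop g s hs]
    rfl
  exact ⟨f, hfeq, ((hb.and hc).and hd).mono fun k hk => ⟨hk.1.1, hk.1.2, hk.2⟩, hequiv_ae⟩
end
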